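/- Let h ≥ 1 and let S_0 ≥ S_1 ≥ … ≥ S_h be a nonincreasing sequence of positive real numbers satisfying S_0 = S_1, and set Tot = Σ_{k=0}^{h} S_k. Then there exists an index z ∈ {0,…,h} such that Tot/3 ≤ Σ_{k=0}^{z} S_k ≤ 2·Tot/3. -/

import Mathlib

/-- Combinatorial core of the one-third version-space splitting lemma:
for a nonincreasing sequence of positive reals `S 0 ≥ S 1 ≥ … ≥ S h` with
`S 0 = S 1`, some prefix sum lies between one third and two thirds of the total. -/
theorem one_third_splitting (h : ℕ) (hh : 1 ≤ h) (S : ℕ → ℝ)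
    (hpos : ∀ k ≤ h, 0 < S k)
    (hmono : ∀ k, k < h → S (k + 1) ≤ S k)
    (h01 : S 0 = S 1) :
    ∃ z ≤ h,
      (∑ k ∈ Finset.range (h + 1), S k) / 3 ≤ ∑ k ∈ Finset.range (z + 1), S k ∧
      ∑ k ∈ Finset.range (z + 1), S k ≤ 2 * (∑ k ∈ Finset.range (h + 1), S k) / 3 := by
  classical
  set Tot := ∑ k ∈ Finset.range (h + 1), S k with hTot
  have hTotpos : 0 < Tot :=
    Finset.sum_pos (fun i hi => hpos i (Nat.lt_succ_iff.mp (Finset.mem_range.mp hi)))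
      ⟨0, Finset.mem_range.mpr (Nat.succ_pos h)⟩
  have hSle0 : ∀ k, k ≤ h → S k ≤ S 0 := by
    intro k
    induction k with
    | zero => intro _; exact le_refl _
    | succ n ih =>
      intro hk
      exact le_trans (hmono n (Nat.lt_of_succ_le hk))
        (ih (le_of_lt (Nat.lt_of_succ_le hk)))
  have hex : ∃ z, Tot / 3 ≤ ∑ k ∈ Finset.range (z + 1), S k := ⟨h, by linarith⟩
  refine ⟨Nat.find hex, ?_, Nat.find_spec hex, ?_⟩
  · exact Nat.find_le (by linarith)
  · have hzh : Nat.find hex ≤ h := Nat.find_le (by linarith)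
    rcases Nat.eq_zero_or_pos (Nat.find hex) with h0 | hpos'
    · rw [h0]
      have h2 : S 0 + S 1 ≤ Tot := by
        have hsub : Finset.range 2 ⊆ Finset.range (h + 1) := by
          apply Finset.range_subset_range.mpr; omega
        have := Finset.sum_le_sum_of_subset_of_nonneg hsub
          (fun i hi _ => le_of_lt (hpos i (Nat.lt_succ_iff.mp (Finset.mem_range.mp hi))))
        rw [Finset.sum_range_succ, Finset.sum_range_one] at this
        exact this
      simp only [Nat.zero_add, Finset.sum_range_one]
      linarith
    · obtain ⟨m, hm⟩ : ∃ m, Nat.find hex = m + 1 := ⟨Nat.find hex - 1, by omega⟩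
      have hmin : ¬ (Tot / 3 ≤ ∑ k ∈ Finset.range (m + 1), S k) :=
        Nat.find_min hex (by omega)
      push_neg at hmin
      have hS0 : S 0 ≤ ∑ k ∈ Finset.range (m + 1), S k := by
        apply Finset.single_le_sum (f := S)
          (fun i hi => le_of_lt (hpos i (by
            have := Finset.mem_range.mp hi; omega)))
        exact Finset.mem_range.mpr (Nat.succ_pos m)
      have hSz : S (m + 1) ≤ S 0 := hSle0 (m + 1) (by omega)
      rw [hm, Finset.sum_range_succ]
      linarith
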